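/- Let d be an integer with d ≥ 2 and let e ∈ ℝ^d be a unit vector. Then the function F(v) = ( ⟨v, e⟩ / ‖v‖^d )^{−1/(d−1)} is convex on the open half-space { v ∈ ℝ^d | ⟨v, e⟩ > 0 }. -/

import Mathlib

open scoped RealInnerProductSpace

/-- Perspective of `x ^ p` is jointly convex. -/
lemma persp_ineq (p : ℝ) (hp : 1 ≤ p) (t₁ t₂ r₁ r₂ a b : ℝ)
    (ht₁ : 0 < t₁) (ht₂ : 0 < t₂) (hr₁ : 0 ≤ r₁) (hr₂ : 0 ≤ r₂)
    (ha : 0 ≤ a) (hb : 0 ≤ b) (hab : a + b = 1) :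
    (a * t₁ + b * t₂) * ((a * r₁ + b * r₂) / (a * t₁ + b * t₂)) ^ p
      ≤ a * (t₁ * (r₁ / t₁) ^ p) + b * (t₂ * (r₂ / t₂) ^ p) := by
  have hT : 0 < a * t₁ + b * t₂ := by
    rcases eq_or_lt_of_le ha with h | h
    · have hb1 : b = 1 := by linarith
      simpa [← h, hb1] using ht₂
    · nlinarith
  have hA : (0:ℝ) ≤ a * t₁ / (a * t₁ + b * t₂) := by positivity
  have hB : (0:ℝ) ≤ b * t₂ / (a * t₁ + b * t₂) := by positivity
  have hAB : a * t₁ / (a * t₁ + b * t₂) + b * t₂ / (a * t₁ + b * t₂) = 1 := by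
    field_simp
  have key := (convexOn_rpow hp).2 (Set.mem_Ici.mpr (div_nonneg hr₁ ht₁.le))
    (Set.mem_Ici.mpr (div_nonneg hr₂ ht₂.le)) hA hB hAB
  simp only [smul_eq_mul] at key
  have hx : a * t₁ / (a * t₁ + b * t₂) * (r₁ / t₁) + b * t₂ / (a * t₁ + b * t₂) * (r₂ / t₂)
      = (a * r₁ + b * r₂) / (a * t₁ + b * t₂) := by
    field_simp
  rw [hx] at key
  have := mul_le_mul_of_nonneg_left key hT.le
  calc (a * t₁ + b * t₂) * ((a * r₁ + b * r₂) / (a * t₁ + b * t₂)) ^ p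
      ≤ (a * t₁ + b * t₂) * (a * t₁ / (a * t₁ + b * t₂) * (r₁ / t₁) ^ p
          + b * t₂ / (a * t₁ + b * t₂) * (r₂ / t₂) ^ p) := this
    _ = a * (t₁ * (r₁ / t₁) ^ p) + b * (t₂ * (r₂ / t₂) ^ p) := by
        field_simp

lemma rewriteF (d : ℕ) (hd : 2 ≤ d) (t r : ℝ) (ht : 0 < t) (hr : 0 < r) :
    (t / r ^ d) ^ (-1 / ((d : ℝ) - 1)) = t * (r / t) ^ ((d : ℝ) / ((d : ℝ) - 1)) := by
  have hd' : (2:ℝ) ≤ (d:ℝ) := by exact_mod_cast hd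
  have hc : (0:ℝ) < (d:ℝ) - 1 := by linarith
  rw [Real.div_rpow ht.le (by positivity), Real.div_rpow hr.le ht.le,
    ← Real.rpow_natCast r d, ← Real.rpow_mul hr.le]
  rw [show (d:ℝ) * (-1 / ((d:ℝ) - 1)) = -((d:ℝ) / ((d:ℝ)-1)) by field_simp,
    Real.rpow_neg hr.le]
  have h1 : t * (r ^ ((d:ℝ) / ((d:ℝ) - 1)) / t ^ ((d:ℝ) / ((d:ℝ) - 1)))
      = t ^ (1 + -((d:ℝ) / ((d:ℝ) - 1))) * r ^ ((d:ℝ) / ((d:ℝ) - 1)) := by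
    rw [Real.rpow_add ht, Real.rpow_one, div_eq_mul_inv, ← Real.rpow_neg ht.le]
    ring
  rw [h1, div_eq_mul_inv (t ^ (-1 / ((d:ℝ) - 1))), ← Real.rpow_neg hr.le]
  congr 2
  · field_simp
    ring
  · rw [← Real.rpow_neg hr.le, neg_neg]

theorem solid_angle_density_sconcave (d : ℕ) (hd : 2 ≤ d)
    (e : EuclideanSpace ℝ (Fin d)) (he : ‖e‖ = 1) :
    ConvexOn ℝ {v : EuclideanSpace ℝ (Fin d) | 0 < ⟪v, e⟫}
      (fun v : EuclideanSpace ℝ (Fin d) =>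
        (⟪v, e⟫ / ‖v‖ ^ d) ^ (-1 / ((d : ℝ) - 1))) := by
  have hd' : (2:ℝ) ≤ (d:ℝ) := by exact_mod_cast hd
  have hc : (0:ℝ) < (d:ℝ) - 1 := by linarith
  set p : ℝ := (d:ℝ) / ((d:ℝ) - 1) with hpdef
  have hp : 1 ≤ p := by rw [le_div_iff₀ hc]; linarith
  constructor
  · exact convex_halfSpace_gt
      ⟨fun x y => by simp [inner_add_left], fun c x => real_inner_smul_left x e c⟩ 0
  · intro v hv w hw a b ha hb hab
    rcases eq_or_lt_of_le ha with ha0 | ha0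
    · have hb1 : b = 1 := by linarith
      simp [← ha0, hb1]
    rcases eq_or_lt_of_le hb with hb0 | hb0
    · have ha1 : a = 1 := by linarith
      simp [← hb0, ha1]
    have hv' : 0 < ⟪v, e⟫ := hv
    have hw' : 0 < ⟪w, e⟫ := hw
    have hnv : 0 < ‖v‖ := by
      rcases eq_or_ne v 0 with h | h
      · simp [h] at hv'
      · exact norm_pos_iff.mpr h
    have hnw : 0 < ‖w‖ := by
      rcases eq_or_ne w 0 with h | h
      · simp [h] at hw'
      · exact norm_pos_iff.mpr h
    have hinner : ⟪a • v + b • w, e⟫ = a * ⟪v, e⟫ + b * ⟪w, e⟫ := by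
      simp [inner_add_left, real_inner_smul_left, Finset.mul_sum, mul_assoc]
    have ht : 0 < ⟪a • v + b • w, e⟫ := by
      rw [hinner]; positivity
    have hnz : 0 < ‖a • v + b • w‖ := by
      rcases eq_or_ne (a • v + b • w) 0 with h | h
      · rw [h] at ht; simp at ht
      · exact norm_pos_iff.mpr h
    simp only
    rw [rewriteF d hd _ _ ht hnz, rewriteF d hd _ _ hv' hnv, rewriteF d hd _ _ hw' hnw]
    have hnorm : ‖a • v + b • w‖ ≤ a * ‖v‖ + b * ‖w‖ := by
      calc ‖a • v + b • w‖ ≤ ‖a • v‖ + ‖b • w‖ := norm_add_le _ _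
        _ = a * ‖v‖ + b * ‖w‖ := by
            rw [norm_smul, norm_smul, Real.norm_of_nonneg ha, Real.norm_of_nonneg hb]
    have step1 : ⟪a • v + b • w, e⟫ * (‖a • v + b • w‖ / ⟪a • v + b • w, e⟫) ^ p
        ≤ ⟪a • v + b • w, e⟫ * ((a * ‖v‖ + b * ‖w‖) / ⟪a • v + b • w, e⟫) ^ p := by
      apply mul_le_mul_of_nonneg_left _ ht.le
      apply Real.rpow_le_rpow (by positivity) _ (by positivity)
      exact (div_le_div_iff_of_pos_right ht).mpr hnorm
    refine step1.trans ?_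
    rw [hinner]
    exact persp_ineq p hp _ _ _ _ a b hv' hw' hnv.le hnw.le ha hb hab
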